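/- Let λ2 ∈ (0,1), p1 ∈ (0,1), p2 ∈ (0,1], and suppose λ2 < p2·(1 − p1)/(1 + p1·p2). Let R be the 2×2 real matrix defined below and I the 2×2 identity matrix. Then I − R is invertible, and (1, 1) · (I − R)⁻¹ · (1, 0)ᵀ = (1 − λ2)·(1 − p1)·p2 / (p2 − λ2 − p1·p2 − λ2·p1·p2); equivalently, the number π0' := (p2 − λ2 − p1·p2 − λ2·p1·p2)/((1 − λ2)·(1 − p1)·p2) satisfies (1, 1) · (I − R)⁻¹ · (π0', 0)ᵀ = 1. -/

import Mathlib

open Matrix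

theorem QBD_normalization (l2 p1 p2 : ℝ)
    (hl2 : l2 ∈ Set.Ioo (0:ℝ) 1) (hp1 : p1 ∈ Set.Ioo (0:ℝ) 1) (hp2 : p2 ∈ Set.Ioc (0:ℝ) 1)
    (hstab : l2 < p2 * (1 - p1) / (1 + p1*p2)) :
    let R : Matrix (Fin 2) (Fin 2) ℝ :=
      !![l2*(1 - p2 + p1*p2) / ((1 - l2)*(1 - p1)*p2), l2 / ((1 - l2)*(1 - p1)*p2);
         l2*p1 / (1 - p1), l2*p1 / (1 - p1)]
    let pi0 : ℝ := (p2 - l2 - p1*p2 - l2*p1*p2) / ((1 - l2)*(1 - p1)*p2)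
    IsUnit (1 - R) ∧
    (![(1:ℝ), 1] ⬝ᵥ ((1 - R)⁻¹ *ᵥ ![(1:ℝ), 0])) =
      (1 - l2)*(1 - p1)*p2 / (p2 - l2 - p1*p2 - l2*p1*p2) ∧
    (![(1:ℝ), 1] ⬝ᵥ ((1 - R)⁻¹ *ᵥ ![pi0, 0])) = 1 := by
  intro R pi0
  obtain ⟨hl2a, hl2b⟩ := hl2
  obtain ⟨hp1a, hp1b⟩ := hp1
  obtain ⟨hp2a, hp2b⟩ := hp2
  have h1l2 : (1:ℝ) - l2 ≠ 0 := by linarith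
  have h1p1 : (1:ℝ) - p1 ≠ 0 := by linarith
  have hp2ne : p2 ≠ 0 := ne_of_gt hp2a
  have hY : (0:ℝ) < 1 + p1*p2 := by nlinarith
  have hstab' : l2 * (1 + p1*p2) < p2 * (1 - p1) := (lt_div_iff₀ hY).mp hstab
  have hN : 0 < p2 - l2 - p1*p2 - l2*p1*p2 := by nlinarith
  have hNne : p2 - l2 - p1*p2 - l2*p1*p2 ≠ 0 := ne_of_gt hN
  have hM : (1 : Matrix (Fin 2) (Fin 2) ℝ) - R =
      !![1 - l2*(1 - p2 + p1*p2) / ((1 - l2)*(1 - p1)*p2), -(l2 / ((1 - l2)*(1 - p1)*p2));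
         -(l2*p1 / (1 - p1)), 1 - l2*p1 / (1 - p1)] := by
    ext i j
    fin_cases i <;> fin_cases j <;>
      simp [R, Matrix.one_apply, Matrix.sub_apply]
  have hdet : ((1 : Matrix (Fin 2) (Fin 2) ℝ) - R).det =
      (p2 - l2 - p1*p2 - l2*p1*p2) / ((1 - l2)*(1 - p1)*p2) := by
    rw [hM, Matrix.det_fin_two_of]
    field_simp
    ring
  have hdetne : ((1 : Matrix (Fin 2) (Fin 2) ℝ) - R).det ≠ 0 := by
    rw [hdet]
    exact div_ne_zero hNne (by positivity)
  have hunit : IsUnit ((1 : Matrix (Fin 2) (Fin 2) ℝ) - R) := by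
    rw [Matrix.isUnit_iff_isUnit_det]
    exact isUnit_iff_ne_zero.mpr hdetne
  have hinv : ((1 : Matrix (Fin 2) (Fin 2) ℝ) - R)⁻¹ =
      ((1 : Matrix (Fin 2) (Fin 2) ℝ) - R).det⁻¹ •
        ((1 : Matrix (Fin 2) (Fin 2) ℝ) - R).adjugate := by
    rw [Matrix.inv_def, Ring.inverse_eq_inv']
  have key : (![(1:ℝ), 1] ⬝ᵥ (((1 : Matrix (Fin 2) (Fin 2) ℝ) - R)⁻¹ *ᵥ ![(1:ℝ), 0])) =
      (1 - l2)*(1 - p1)*p2 / (p2 - l2 - p1*p2 - l2*p1*p2) := by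
    rw [hinv, hdet, hM, Matrix.adjugate_fin_two_of]
    simp [Matrix.mulVec, dotProduct, Fin.sum_univ_two, Matrix.smul_apply]
    field_simp
    ring
  refine ⟨hunit, key, ?_⟩
  have : (![pi0, (0:ℝ)]) = pi0 • ![(1:ℝ), 0] := by
    funext i; fin_cases i <;> simp
  rw [this, Matrix.mulVec_smul, dotProduct_smul, key]
  show pi0 * _ = 1
  simp only [pi0]
  field_simp
  exact div_self (ne_of_gt (by linarith))
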